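/- Let A be a real n×n matrix, B a real n×m matrix, and P a real n×n̂ matrix. There exist a real n̂×n̂ matrix Â and a real m×n̂ matrix Q such that A * P = P * Â − B * Q if and only if the column space of A * P is contained in the sum of the column space of P and the column space of B. -/
import Mathlib


/-- There exist `Â`, `Q` with `A * P = P * Â - B * Q` iff the column space of `A * P`
is contained in the sum of the column spaces of `P` and `B`. -/
theorem stmt_1 {n m nh : ℕ} (A : Matrix (Fin n) (Fin n) ℝ) (B : Matrix (Fin n) (Fin m) ℝ)
    (P : Matrix (Fin n) (Fin nh) ℝ) :
    (∃ (Ahat : Matrix (Fin nh) (Fin nh) ℝ) (Q : Matrix (Fin m) (Fin nh) ℝ),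
        A * P = P * Ahat - B * Q) ↔
      LinearMap.range (A * P).mulVecLin ≤
        LinearMap.range P.mulVecLin ⊔ LinearMap.range B.mulVecLin := by
  constructor
  · rintro ⟨Ahat, Q, hEq⟩ w hw
    obtain ⟨x, rfl⟩ := hw
    have : (A * P).mulVecLin x
        = P.mulVecLin (Ahat.mulVec x) + B.mulVecLin (-(Q.mulVec x)) := by
      simp [hEq, Matrix.mulVecLin_apply, Matrix.mulVec_mulVec, Matrix.sub_mulVec,
        sub_eq_add_neg, Matrix.mulVec_neg, Matrix.neg_mulVec]
    rw [this]
    exact Submodule.add_mem _ (Submodule.mem_sup_left ⟨_, rfl⟩)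
      (Submodule.mem_sup_right ⟨_, rfl⟩)
  · intro h
    have h' : ∀ j, ∃ u v, P.mulVec u + B.mulVec v
        = (A * P).mulVec (Pi.single j 1) := by
      intro j
      obtain ⟨y, hy, z, hz, hs⟩ := Submodule.mem_sup.mp (h ⟨Pi.single j 1, rfl⟩)
      obtain ⟨u, rfl⟩ := hy
      obtain ⟨v, rfl⟩ := hz
      exact ⟨u, v, hs⟩
    choose u v huv using h'
    refine ⟨Matrix.of fun i j => u j i, Matrix.of fun i j => -(v j i), ?_⟩
    ext i j
    have := congrFun (huv j) i
    simp only [Matrix.mulVec_single, Pi.add_apply, Matrix.mulVec, dotProduct] at this ⊢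
    simp only [Matrix.sub_apply, Matrix.mul_apply, Matrix.of_apply]
    have hlhs : (∑ k, (A * P) i k * (Pi.single j 1 : Fin nh → ℝ) k) = (A * P) i j := by
      simp [Pi.single_apply]
    rw [← Matrix.mul_apply, ← hlhs, ← this]
    simp [Finset.sum_neg_distrib]
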